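/- Each of the three critical points (φ, φ), (ψ, ψ), (−1, −1) of F (where φ = (1 + √5)/2 and ψ = (1 − √5)/2) is non-degenerate: at each of these points the Hessian determinant (∂²F/∂u²)(∂²F/∂v²) − (∂²F/∂u∂v)² is nonzero. -/

import Mathlib

open Complex

/-- The Pascaleff–Tonkonog potential function of the monotone Lagrangian torus in the
monotone blow-up of `ℂP²` at four points (Novikov parameter `T` normalized to `1`). -/
noncomputable def PTpotential (u v : ℂ) : ℂ :=
  (1 + u + v) * (1 + u⁻¹) * (1 + v⁻¹) - 3

/-- The golden ratio `(1 + √5)/2` as a complex number. -/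
noncomputable def goldenφ : ℂ := (1 + (Real.sqrt 5 : ℂ)) / 2

/-- The conjugate golden ratio `(1 - √5)/2` as a complex number. -/
noncomputable def goldenψ : ℂ := (1 - (Real.sqrt 5 : ℂ)) / 2

/-- Second partial derivative `∂²F/∂u²` at `(u, v)`. -/
noncomputable def Fuu (u v : ℂ) : ℂ :=
  deriv (fun x => deriv (fun x' => PTpotential x' v) x) u

/-- Second partial derivative `∂²F/∂v²` at `(u, v)`. -/
noncomputable def Fvv (u v : ℂ) : ℂ :=
  deriv (fun y => deriv (fun y' => PTpotential u y') y) v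

/-- Mixed second partial derivative `∂²F/∂u∂v` at `(u, v)`. -/
noncomputable def Fuv (u v : ℂ) : ℂ :=
  deriv (fun x => deriv (fun y => PTpotential x y) v) u

/-- The Hessian determinant `(∂²F/∂u²)(∂²F/∂v²) - (∂²F/∂u∂v)²` at `(u, v)`. -/
noncomputable def hessDet (u v : ℂ) : ℂ :=
  Fuu u v * Fvv u v - (Fuv u v) ^ 2

/-- First partial derivative in the second variable. -/
lemma PT_deriv_snd (x : ℂ) {v : ℂ} (hv : v ≠ 0) :
    deriv (fun y => PTpotential x y) v
      = (1 + x⁻¹) * (1 + v⁻¹) + (1 + x + v) * (1 + x⁻¹) * (-(v ^ 2)⁻¹) := by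
  have h1 : HasDerivAt (fun y : ℂ => (1 + x + y) * (1 + x⁻¹)) (1 * (1 + x⁻¹)) v :=
    ((hasDerivAt_id v).const_add (1 + x)).mul_const _
  have h2 : HasDerivAt (fun y : ℂ => 1 + y⁻¹) (-(v ^ 2)⁻¹) v :=
    (hasDerivAt_inv hv).const_add 1
  have h := ((h1.mul h2).sub_const 3)
  have heq : (fun y : ℂ => (1 + x + y) * (1 + x⁻¹) * (1 + y⁻¹) - 3)
      = fun y => PTpotential x y := rfl
  simp only [Pi.mul_def, Pi.add_def] at h
  rw [← heq, h.deriv]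
  ring

/-- First partial derivative in the first variable. -/
lemma PT_deriv_fst (v : ℂ) {x : ℂ} (hx : x ≠ 0) :
    deriv (fun x' => PTpotential x' v) x
      = (1 * (1 + x⁻¹) + (1 + x + v) * (-(x ^ 2)⁻¹)) * (1 + v⁻¹) := by
  have h1 : HasDerivAt (fun x' : ℂ => (1 + x' + v)) 1 x := by
    simpa using ((hasDerivAt_id x).const_add 1).add_const v
  have h2 : HasDerivAt (fun x' : ℂ => 1 + x'⁻¹) (-(x ^ 2)⁻¹) x :=
    (hasDerivAt_inv hx).const_add 1
  have h := ((h1.mul h2).mul_const (1 + v⁻¹)).sub_const 3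
  have heq : (fun x' : ℂ => (1 + x' + v) * (1 + x'⁻¹) * (1 + v⁻¹) - 3)
      = fun x' => PTpotential x' v := rfl
  simp only [Pi.mul_def, Pi.add_def] at h
  rw [← heq, h.deriv]

lemma Fuu_eq (v : ℂ) {u : ℂ} (hu : u ≠ 0) :
    Fuu u v = 2 * (1 + u + v) * (1 + v⁻¹) * (u ^ 3)⁻¹ - 2 * (1 + v⁻¹) * (u ^ 2)⁻¹ := by
  unfold Fuu
  have hev : (fun x => deriv (fun x' => PTpotential x' v) x)
      =ᶠ[nhds u] fun x => (1 * (1 + x⁻¹) + (1 + x + v) * (-(x ^ 2)⁻¹)) * (1 + v⁻¹) := by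
    filter_upwards [isOpen_ne.mem_nhds hu] with x hx
    exact PT_deriv_fst v hx
  rw [hev.deriv_eq]
  have h2 : HasDerivAt (fun x : ℂ => 1 + x⁻¹) (-(u ^ 2)⁻¹) u :=
    (hasDerivAt_inv hu).const_add 1
  have hsq : HasDerivAt (fun x : ℂ => -(x ^ 2)⁻¹)
      (-(-(↑(2:ℕ) * u ^ (2-1)) / (u ^ 2) ^ 2)) u :=
    ((hasDerivAt_pow 2 u).inv (pow_ne_zero 2 hu)).neg
  have h1 : HasDerivAt (fun x : ℂ => (1 + x + v)) 1 u := by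
    simpa using ((hasDerivAt_id u).const_add 1).add_const v
  have h := (((h2.const_mul 1).add (h1.mul hsq)).mul_const (1 + v⁻¹))
  simp only [Pi.mul_def, Pi.add_def] at h
  rw [h.deriv]
  field_simp
  ring

lemma Fvv_eq (u : ℂ) {v : ℂ} (hv : v ≠ 0) :
    Fvv u v = 2 * (1 + u + v) * (1 + u⁻¹) * (v ^ 3)⁻¹ - 2 * (1 + u⁻¹) * (v ^ 2)⁻¹ := by
  unfold Fvv
  have hev : (fun y => deriv (fun y' => PTpotential u y') y)
      =ᶠ[nhds v] fun y => (1 + u⁻¹) * (1 + y⁻¹) + (1 + u + y) * (1 + u⁻¹) * (-(y ^ 2)⁻¹) := by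
    filter_upwards [isOpen_ne.mem_nhds hv] with y hy
    exact PT_deriv_snd u hy
  rw [hev.deriv_eq]
  have h2 : HasDerivAt (fun y : ℂ => 1 + y⁻¹) (-(v ^ 2)⁻¹) v :=
    (hasDerivAt_inv hv).const_add 1
  have hsq : HasDerivAt (fun y : ℂ => -(y ^ 2)⁻¹)
      (-(-(↑(2:ℕ) * v ^ (2-1)) / (v ^ 2) ^ 2)) v :=
    ((hasDerivAt_pow 2 v).inv (pow_ne_zero 2 hv)).neg
  have h1 : HasDerivAt (fun y : ℂ => (1 + u + y) * (1 + u⁻¹)) (1 * (1 + u⁻¹)) v :=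
    ((hasDerivAt_id v).const_add (1 + u)).mul_const _
  have h := (h2.const_mul (1 + u⁻¹)).add (h1.mul hsq)
  simp only [Pi.mul_def, Pi.add_def] at h
  rw [h.deriv]
  field_simp
  ring

lemma Fuv_eq {u v : ℂ} (hu : u ≠ 0) (hv : v ≠ 0) :
    Fuv u v = ((1 + u⁻¹) + (1 + u + v) * (-(u ^ 2)⁻¹)) * (-(v ^ 2)⁻¹)
      + (-(u ^ 2)⁻¹) * (1 + v⁻¹) := by
  unfold Fuv
  have hfn : (fun x => deriv (fun y => PTpotential x y) v)
      = fun x => (1 + x⁻¹) * (1 + v⁻¹) + (1 + x + v) * (1 + x⁻¹) * (-(v ^ 2)⁻¹) := by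
    funext x; exact PT_deriv_snd x hv
  rw [hfn]
  have hinv : HasDerivAt (fun x : ℂ => 1 + x⁻¹) (-(u ^ 2)⁻¹) u :=
    (hasDerivAt_inv hu).const_add 1
  have h1 : HasDerivAt (fun x : ℂ => (1 + x + v)) 1 u := by
    simpa using ((hasDerivAt_id u).const_add 1).add_const v
  have h := (hinv.mul_const (1 + v⁻¹)).add (((h1.mul hinv).mul_const (-(v ^ 2)⁻¹)))
  simp only [Pi.mul_def, Pi.add_def] at h
  rw [h.deriv]
  field_simp
  ring

/-- At a diagonal point `(t, t)` where `t² = t + 1`, the Hessian determinant is `2 + t`. -/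
lemma hessDet_diag {t : ℂ} (ht : t ≠ 0) (h1 : t ^ 2 = t + 1) :
    hessDet t t = 2 + t := by
  have hi1 : t⁻¹ = t - 1 :=
    inv_eq_of_mul_eq_one_right (by linear_combination h1)
  have hi2 : (t ^ 2)⁻¹ = 2 - t :=
    inv_eq_of_mul_eq_one_right (by linear_combination (1 - t) * h1)
  have hi3 : (t ^ 3)⁻¹ = 2 * t - 3 :=
    inv_eq_of_mul_eq_one_right (by linear_combination (2 * t ^ 2 - t + 1) * h1)
  unfold hessDet
  rw [Fuu_eq t ht, Fvv_eq t ht, Fuv_eq ht ht, hi1, hi2, hi3]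
  linear_combination (60 * t ^ 4 - 16 * t ^ 3 - 105 * t ^ 2 - 17 * t + 18) * h1

/-- Each of the three critical points `(φ, φ)`, `(ψ, ψ)`, `(-1, -1)` of `F` is
non-degenerate: the Hessian determinant is nonzero there. -/
theorem critical_points_of_PTpotential_nondegenerate :
    hessDet goldenφ goldenφ ≠ 0 ∧ hessDet goldenψ goldenψ ≠ 0 ∧ hessDet (-1) (-1) ≠ 0 := by
  have hs : ((Real.sqrt 5 : ℝ) : ℂ) * ((Real.sqrt 5 : ℝ) : ℂ) = 5 := by
    rw [← ofReal_mul, Real.mul_self_sqrt (by norm_num)]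
    norm_num
  have hprod : goldenφ * goldenψ = -1 := by
    unfold goldenφ goldenψ
    linear_combination (-(1:ℂ)/4) * hs
  have hφ : goldenφ ≠ 0 := by
    intro h; rw [h, zero_mul] at hprod; exact (by norm_num : (0:ℂ) ≠ -1) hprod
  have hψ : goldenψ ≠ 0 := by
    intro h; rw [h, mul_zero] at hprod; exact (by norm_num : (0:ℂ) ≠ -1) hprod
  have h1φ : goldenφ ^ 2 = goldenφ + 1 := by
    unfold goldenφ; linear_combination ((1:ℂ)/4) * hs
  have h1ψ : goldenψ ^ 2 = goldenψ + 1 := by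
    unfold goldenψ; linear_combination ((1:ℂ)/4) * hs
  have h5 : (2 + goldenφ) * (2 + goldenψ) = 5 := by
    unfold goldenφ goldenψ; linear_combination (-(1:ℂ)/4) * hs
  refine ⟨?_, ?_, ?_⟩
  · rw [hessDet_diag hφ h1φ]
    intro h; rw [h, zero_mul] at h5; exact (by norm_num : (0:ℂ) ≠ 5) h5
  · rw [hessDet_diag hψ h1ψ]
    intro h; rw [h, mul_zero] at h5; exact (by norm_num : (0:ℂ) ≠ 5) h5
  · have hm : (-1 : ℂ) ≠ 0 := by norm_num
    unfold hessDet
    rw [Fuu_eq (-1) hm, Fvv_eq (-1) hm, Fuv_eq hm hm]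
    norm_num
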